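/- Monotonicity of the opinion-dependent reproduction number: assume γ_j > 0 and θ_j > 0 for all j, and let x, y ∈ [0,1]^n with x_j ≤ y_j for all j. Define M(z) := I − Δ + B·diag(z)·(I − diag(Ψ(z)))·W for z ∈ [0,1]^n, where Ψ(z)_j := θ_j (1 − z_j) / (γ_j z_j + θ_j (1 − z_j)). Then M(x) and M(y) are nonnegative matrices with M(x) ≤ M(y) entrywise, and the spectral radius (the maximum of the moduli of the complex eigenvalues) satisfies ρ(M(x)) ≤ ρ(M(y)). -/

import Mathlib

open Matrix

/-- The spectral radius of a real matrix: the supremum of the moduli of its complex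
eigenvalues (the roots of its characteristic polynomial over `ℂ`). -/
noncomputable def specRad {n : ℕ} (M : Matrix (Fin n) (Fin n) ℝ) : ℝ :=
  sSup {r : ℝ | ∃ μ : ℂ,
    (M.map (fun x : ℝ => (x : ℂ))).charpoly.IsRoot μ ∧ r = ‖μ‖}

open Polynomial Filter in
private lemma aux_root_iff_spec {n : ℕ} (B : Matrix (Fin n) (Fin n) ℂ) (μ : ℂ) :
    B.charpoly.IsRoot μ ↔ μ ∈ spectrum ℂ B := by
  rw [spectrum.mem_iff, Matrix.isUnit_iff_isUnit_det, isUnit_iff_ne_zero, not_ne_iff]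
  have h1 : algebraMap ℂ (Matrix (Fin n) (Fin n) ℂ) μ = scalar (Fin n) μ := rfl
  have h2 : B.charpoly.eval μ = (scalar (Fin n) μ - B).det := by
    rw [Matrix.charpoly, eval_det, matPolyEquiv_charmatrix]; simp
  rw [h1, ← h2]; rfl

open Polynomial Filter in
private lemma aux_specRad_mono {n : ℕ} (hn : 1 ≤ n) (P Q : Matrix (Fin n) (Fin n) ℝ)
    (h0 : ∀ i j, 0 ≤ P i j) (h1 : ∀ i j, P i j ≤ Q i j) :
    specRad P ≤ specRad Q := by
  letI := Matrix.linftyOpNormedRing (α := ℂ) (n := Fin n)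
  letI := Matrix.linftyOpNormedAlgebra (α := ℂ) (R := ℂ) (n := Fin n)
  set c : ℝ →+* ℂ := Complex.ofRealHom
  set P' := P.map (fun x : ℝ => (x : ℂ)) with hP'
  set Q' := Q.map (fun x : ℝ => (x : ℂ)) with hQ'
  have hpow : ∀ k : ℕ, (∀ i j, 0 ≤ (P ^ k) i j) ∧ (∀ i j, (P ^ k) i j ≤ (Q ^ k) i j)
      ∧ (∀ i j, 0 ≤ (Q ^ k) i j) := by
    intro k
    induction k with
    | zero => refine ⟨?_, ?_, ?_⟩ <;> intro i j <;>
        simp [Matrix.one_apply] <;> split <;> simp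
    | succ k ih =>
      obtain ⟨ih0, ih1, ih2⟩ := ih
      refine ⟨fun i j => ?_, fun i j => ?_, fun i j => ?_⟩ <;>
        rw [pow_succ, Matrix.mul_apply] <;> [skip; rw [pow_succ, Matrix.mul_apply]; skip]
      · exact Finset.sum_nonneg fun l _ => mul_nonneg (ih0 i l) (h0 l j)
      · exact Finset.sum_le_sum fun l _ => mul_le_mul (ih1 i l) (h1 l j) (h0 l j)
          (le_trans (ih0 i l) (ih1 i l))
      · exact Finset.sum_nonneg fun l _ => mul_nonneg (ih2 i l) (le_trans (h0 l j) (h1 l j))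
  have hmpow : ∀ (A : Matrix (Fin n) (Fin n) ℝ) (k : ℕ),
      (A.map (fun x : ℝ => (x : ℂ))) ^ k = (A ^ k).map (fun x : ℝ => (x : ℂ)) := by
    intro A k
    have : ∀ B : Matrix (Fin n) (Fin n) ℝ, B.map (fun x : ℝ => (x : ℂ)) = c.mapMatrix B :=
      fun B => rfl
    rw [this, this, ← map_pow]
  have hnorm : ∀ k : ℕ, ‖P' ^ k‖₊ ≤ ‖Q' ^ k‖₊ := by
    intro k
    rw [hmpow, hmpow, Matrix.linfty_opNNNorm_def, Matrix.linfty_opNNNorm_def]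
    refine Finset.sup_mono_fun fun i _ => Finset.sum_le_sum fun j _ => ?_
    simp only [Matrix.map_apply]
    rw [← NNReal.coe_le_coe]
    simp only [coe_nnnorm, Complex.norm_real, Real.norm_eq_abs]
    exact abs_le_abs ((hpow k).2.1 i j)
      (le_trans (neg_nonpos_of_nonneg ((hpow k).1 i j)) ((hpow k).2.2 i j))
  have hsr : spectralRadius ℂ P' ≤ spectralRadius ℂ Q' := by
    refine le_of_tendsto_of_tendsto'
      (spectrum.pow_nnnorm_pow_one_div_tendsto_nhds_spectralRadius P')
      (spectrum.pow_nnnorm_pow_one_div_tendsto_nhds_spectralRadius Q') fun k => ?_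
    exact ENNReal.rpow_le_rpow (by exact_mod_cast hnorm k) (by positivity)
  have hfin : ∀ B : Matrix (Fin n) (Fin n) ℂ, {μ : ℂ | B.charpoly.IsRoot μ}.Finite :=
    fun B => Polynomial.finite_setOf_isRoot B.charpoly_monic.ne_zero
  have hne : ∀ B : Matrix (Fin n) (Fin n) ℂ, {μ : ℂ | B.charpoly.IsRoot μ}.Nonempty := by
    intro B
    refine Complex.exists_root ?_
    rw [Matrix.charpoly_degree_eq_dim]
    simpa [Fintype.card_fin] using by exact_mod_cast Nat.pos_of_ne_zero (by omega)
  have hSet : ∀ A : Matrix (Fin n) (Fin n) ℝ,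
      {r : ℝ | ∃ μ : ℂ, (A.map (fun x : ℝ => (x : ℂ))).charpoly.IsRoot μ ∧ r = ‖μ‖}
      = (fun μ : ℂ => ‖μ‖) '' {μ : ℂ | (A.map (fun x : ℝ => (x : ℂ))).charpoly.IsRoot μ} := by
    intro A; ext r; simp [eq_comm, and_comm]
  obtain ⟨ν, hν, hνmax⟩ := Set.exists_max_image _ (fun μ : ℂ => ‖μ‖) (hfin Q') (hne Q')
  have hνmax' : ∀ μ ∈ {μ : ℂ | Q'.charpoly.IsRoot μ}, ‖μ‖ ≤ ‖ν‖ := by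
    intro μ hμ
    exact hνmax μ hμ
  have hQsr : spectralRadius ℂ Q' ≤ (‖ν‖₊ : ENNReal) := by
    rw [spectralRadius]
    refine iSup₂_le fun μ hμ => ?_
    rw [← aux_root_iff_spec] at hμ
    exact_mod_cast ENNReal.coe_le_coe.mpr (by
      rw [← NNReal.coe_le_coe]
      simpa [coe_nnnorm] using hνmax' μ hμ)
  have hbdd : BddAbove ((fun μ : ℂ => ‖μ‖) '' {μ : ℂ | Q'.charpoly.IsRoot μ}) :=
    ((hfin Q').image _).bddAbove
  rw [specRad, specRad, hSet, hSet]
  refine csSup_le ((hne P').image _) ?_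
  rintro r ⟨μ, hμ, rfl⟩
  have hle : ‖μ‖ ≤ ‖ν‖ := by
    have h1 : (‖μ‖₊ : ENNReal) ≤ spectralRadius ℂ P' := by
      rw [spectralRadius]
      exact le_iSup₂ (f := fun k (_ : k ∈ spectrum ℂ P') => (‖k‖₊ : ENNReal)) μ
        ((aux_root_iff_spec P' μ).mp hμ)
    have := le_trans h1 (le_trans hsr hQsr)
    rw [ENNReal.coe_le_coe, ← NNReal.coe_le_coe] at this
    simpa [coe_nnnorm] using this
  exact le_trans hle (le_csSup hbdd ⟨ν, hν, rfl⟩)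

private lemma aux_core_pos (γ θ x : ℝ) (hγ : 0 < γ) (hθ : 0 < θ) (hx0 : 0 ≤ x) (hx1 : x ≤ 1) :
    0 < γ * x + θ * (1 - x) := by
  nlinarith [mul_nonneg hγ.le hx0, mul_nonneg hθ.le (sub_nonneg.2 hx1), mul_pos hγ hθ]

private lemma aux_core_mono (γ θ x y : ℝ) (hγ : 0 < γ) (hθ : 0 < θ) (hx0 : 0 ≤ x) (hxy : x ≤ y)
    (hy1 : y ≤ 1) :
    x * (1 - θ * (1 - x) / (γ * x + θ * (1 - x)))
      ≤ y * (1 - θ * (1 - y) / (γ * y + θ * (1 - y))) := by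
  have hy0 : 0 ≤ y := le_trans hx0 hxy
  have hx1 : x ≤ 1 := le_trans hxy hy1
  have hdx := aux_core_pos γ θ x hγ hθ hx0 hx1
  have hdy := aux_core_pos γ θ y hγ hθ hy0 hy1
  have ex : x * (1 - θ * (1 - x) / (γ * x + θ * (1 - x))) = γ * x ^ 2 / (γ * x + θ * (1 - x)) := by
    rw [one_sub_div hdx.ne', mul_div_assoc', div_left_inj' hdx.ne']; ring
  have ey : y * (1 - θ * (1 - y) / (γ * y + θ * (1 - y))) = γ * y ^ 2 / (γ * y + θ * (1 - y)) := by
    rw [one_sub_div hdy.ne', mul_div_assoc', div_left_inj' hdy.ne']; ring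
  rw [ex, ey, div_le_div_iff₀ hdx hdy]
  nlinarith [mul_nonneg (sub_nonneg.2 hxy)
      (mul_nonneg (mul_nonneg hγ.le (mul_nonneg hγ.le hx0)) hy0),
    mul_nonneg (sub_nonneg.2 hxy)
      (mul_nonneg hγ.le (mul_nonneg hθ.le (mul_nonneg hx0 (sub_nonneg.2 hy1)))),
    mul_nonneg (sub_nonneg.2 hxy) (mul_nonneg hγ.le (mul_nonneg hθ.le hy0))]

private lemma aux_core_nonneg (γ θ x : ℝ) (hγ : 0 < γ) (hθ : 0 < θ) (hx0 : 0 ≤ x) (hx1 : x ≤ 1) :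
    0 ≤ x * (1 - θ * (1 - x) / (γ * x + θ * (1 - x))) := by
  have hdx := aux_core_pos γ θ x hγ hθ hx0 hx1
  have : θ * (1 - x) / (γ * x + θ * (1 - x)) ≤ 1 := by
    rw [div_le_one hdx]; nlinarith
  nlinarith

/-- Monotonicity of the opinion-dependent reproduction number. -/
theorem reproduction_number_monotone
    (n : ℕ) (hn : 1 ≤ n)
    (β δ : Fin n → ℝ)
    (hβ : ∀ j, β j ∈ Set.Icc (0 : ℝ) 1) (hδ : ∀ j, δ j ∈ Set.Icc (0 : ℝ) 1)
    (γ θ : Fin n → ℝ) (hγpos : ∀ j, 0 < γ j) (hθpos : ∀ j, 0 < θ j)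
    (W : Matrix (Fin n) (Fin n) ℝ)
    (hW0 : ∀ j k, 0 ≤ W j k) (hW1 : ∀ j, ∑ k, W j k = 1)
    (x y : Fin n → ℝ)
    (hx : ∀ j, x j ∈ Set.Icc (0 : ℝ) 1) (hy : ∀ j, y j ∈ Set.Icc (0 : ℝ) 1)
    (hxy : ∀ j, x j ≤ y j)
    (M : (Fin n → ℝ) → Matrix (Fin n) (Fin n) ℝ)
    (hM : ∀ z : Fin n → ℝ, M z = 1 - Matrix.diagonal δ
        + Matrix.diagonal β * Matrix.diagonal z
          * (1 - Matrix.diagonal (fun j =>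
              θ j * (1 - z j) / (γ j * z j + θ j * (1 - z j)))) * W) :
    (∀ i j, 0 ≤ M x i j) ∧ (∀ i j, 0 ≤ M y i j) ∧
    (∀ i j, M x i j ≤ M y i j) ∧ specRad (M x) ≤ specRad (M y) := by
  have hentry : ∀ (z : Fin n → ℝ) (i j : Fin n),
      M z i j = (if i = j then 1 - δ i else 0)
        + β i * (z i * (1 - θ i * (1 - z i) / (γ i * z i + θ i * (1 - z i)))) * W i j := by
    intro z i j
    have e1 : ∀ f : Fin n → ℝ, (1 : Matrix (Fin n) (Fin n) ℝ) - Matrix.diagonal f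
        = Matrix.diagonal (fun j => 1 - f j) := by
      intro f
      rw [← Matrix.diagonal_one, ← Matrix.diagonal_sub]
    rw [hM z, e1, e1, Matrix.diagonal_mul_diagonal, Matrix.diagonal_mul_diagonal,
      Matrix.add_apply, Matrix.diagonal_mul, Matrix.diagonal_apply]
    split <;> ring
  have hnn : ∀ (z : Fin n → ℝ), (∀ j, z j ∈ Set.Icc (0 : ℝ) 1) → ∀ i j, 0 ≤ M z i j := by
    intro z hz i j
    rw [hentry]
    have h1 : (0 : ℝ) ≤ if i = j then 1 - δ i else 0 := by
      split
      · linarith [(hδ i).2]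
      · exact le_refl 0
    refine add_nonneg h1 (mul_nonneg (mul_nonneg (hβ i).1 ?_) (hW0 i j))
    exact aux_core_nonneg (γ i) (θ i) (z i) (hγpos i) (hθpos i) (hz i).1 (hz i).2
  have hmono : ∀ i j, M x i j ≤ M y i j := by
    intro i j
    rw [hentry, hentry]
    refine add_le_add_right (mul_le_mul_of_nonneg_right
      (mul_le_mul_of_nonneg_left ?_ (hβ i).1) (hW0 i j)) _
    exact aux_core_mono (γ i) (θ i) (x i) (y i) (hγpos i) (hθpos i) (hx i).1 (hxy i) (hy i).2
  exact ⟨hnn x hx, hnn y hy, hmono, aux_specRad_mono hn (M x) (M y) (hnn x hx) hmono⟩
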